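/- arXiv:2101.02572 — 2 statements merged into one kernel-verified Lean document; each statement's English description precedes it below -/
import Mathlib

section
/- For every rooted tree T and every vertex w of T, the restoration value R_T(w) is a positive integer. -/
/-- A rooted tree: a root with a finite list of subtrees. -/
inductive RTree where
  | node : List RTree → RTree

/-- Restoration number and period of a rooted tree, by mutual recursion:
`RP (leaf) = (1, 2)`; for a root with subtrees `ts`,
`R = lcm of the periods of the subtrees` and
`P = (m+2)·R − Σᵢ (R / P(Tᵢ))·R(Tᵢ)`. -/
def RTree.RP : RTree → ℕ × ℕ
  | .node [] => (1, 2)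
  | .node ts@(_ :: _) =>
      let rps := ts.attach.map (fun t => RTree.RP t.1)
      let r := (rps.map Prod.snd).foldr Nat.lcm 1
      (r, (ts.length + 2) * r - (rps.map (fun q => r / q.2 * q.1)).sum)
  decreasing_by
    cases t with
    | mk t ht =>
      have := List.sizeOf_lt_of_mem ht
      simp_all; omega

/-- Restoration number of a rooted tree. -/
def RTree.R (t : RTree) : ℕ := t.RP.1

/-- Period of a rooted tree. -/
def RTree.P (t : RTree) : ℕ := t.RP.2

/-- Vertices are addressed by paths from the root (lists of child indices).
`restAt T w` is the restoration value `R_T(w)` of the vertex `w` in `T`: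
`R_T(root) = R(T)` and for `w` in the `k`-th subtree `T_k`,
`R_T(k :: w) = (R(T)/P(T_k)) · R_{T_k}(w)`. (Value `0` for invalid addresses.) -/
def RTree.restAt : RTree → List ℕ → ℕ
  | t, [] => t.R
  | .node ts, k :: rest =>
      match h : ts[k]? with
      | some tk => (RTree.node ts).R / tk.P * tk.restAt rest
      | none => 0
  decreasing_by
    simp only [List.getElem?_eq_some_iff] at h
    obtain ⟨hk, rfl⟩ := h
    simpa using Nat.lt_succ_of_le (List.sizeOf_le_of_mem (List.getElem_mem hk))

/-- `isVertex T w`: the address `w` denotes an actual vertex of `T`. -/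
def RTree.isVertex : RTree → List ℕ → Prop
  | _, [] => True
  | .node ts, k :: rest =>
      match h : ts[k]? with
      | some tk => tk.isVertex rest
      | none => False
  decreasing_by
    simp only [List.getElem?_eq_some_iff] at h
    obtain ⟨hk, rfl⟩ := h
    simpa using Nat.lt_succ_of_le (List.sizeOf_le_of_mem (List.getElem_mem hk))
lemma RTree.R_cons (a : RTree) (ts : List RTree) :
    (RTree.node (a :: ts)).R = ((a::ts).map RTree.P).foldr Nat.lcm 1 := by
  simp [RTree.R, RTree.P, RTree.RP, List.map_map, Function.comp]; rfl

lemma RTree.P_cons (a : RTree) (ts : List RTree) :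
    (RTree.node (a :: ts)).P =
      (ts.length + 3) * (RTree.node (a :: ts)).R
        - (((a::ts).map (fun t => (RTree.node (a :: ts)).R / t.P * t.R)).sum) := by
  rw [RTree.R_cons]
  simp [RTree.P, RTree.R, RTree.RP, List.map_map, Function.comp]
  rfl

lemma dvd_foldr_lcm {l : List ℕ} {x : ℕ} (h : x ∈ l) : x ∣ l.foldr Nat.lcm 1 := by
  induction l with
  | nil => simp at h
  | cons a l ih =>
    rcases List.mem_cons.1 h with rfl | h
    · exact Nat.dvd_lcm_left _ _
    · exact (ih h).trans (Nat.dvd_lcm_right _ _)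

lemma foldr_lcm_pos {l : List ℕ} (h : ∀ x ∈ l, 0 < x) : 0 < l.foldr Nat.lcm 1 := by
  induction l with
  | nil => simp
  | cons a l ih =>
    exact Nat.lcm_pos (h a (by simp)) (ih fun x hx => h x (by simp [hx]))

lemma RTree.rp_spec : ∀ t : RTree, 0 < t.R ∧ 2 * t.R ≤ t.P
  | .node [] => by simp [RTree.R, RTree.P, RTree.RP]
  | .node (a :: ts) => by
    have IH : ∀ t ∈ a :: ts, 0 < t.R ∧ 2 * t.R ≤ t.P := by
      intro t ht
      have := List.sizeOf_lt_of_mem ht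
      exact rp_spec t
    have hPpos : ∀ t ∈ a :: ts, 0 < t.P := fun t ht =>
      lt_of_lt_of_le (by have := (IH t ht).1; omega) (IH t ht).2
    have hrpos : 0 < (RTree.node (a :: ts)).R := by
      rw [RTree.R_cons]
      exact foldr_lcm_pos (by
        intro x hx
        obtain ⟨t, ht, rfl⟩ := List.mem_map.1 hx
        exact hPpos t ht)
    refine ⟨hrpos, ?_⟩
    set r := (RTree.node (a :: ts)).R with hr
    have hterm : ∀ t ∈ a :: ts, r / t.P * t.R ≤ r := by
      intro t ht
      have hdvd : t.P ∣ r := by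
        rw [hr, RTree.R_cons]
        exact dvd_foldr_lcm (List.mem_map.2 ⟨t, ht, rfl⟩)
      calc r / t.P * t.R ≤ r / t.P * t.P :=
            Nat.mul_le_mul_left _ (le_trans (by have := (IH t ht).1; omega) (IH t ht).2)
        _ = r := Nat.div_mul_cancel hdvd
    have hsum : ((a :: ts).map (fun t => r / t.P * t.R)).sum ≤ (ts.length + 1) * r := by
      have := List.sum_le_card_nsmul ((a :: ts).map (fun t => r / t.P * t.R)) r (by
        intro x hx
        obtain ⟨t, ht, rfl⟩ := List.mem_map.1 hx
        exact hterm t ht)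
      simpa [smul_eq_mul] using this
    rw [RTree.P_cons, ← hr]
    have : (ts.length + 3) * r = 2 * r + (ts.length + 1) * r := by ring
    omega
termination_by t => sizeOf t

/-- For every rooted tree `T` and every vertex `w` of `T`, the restoration
value `R_T(w)` is a positive integer. -/
theorem restoration_value_pos (T : RTree) (w : List ℕ) (hw : T.isVertex w) :
    0 < T.restAt w := by
  match T, w with
  | t, [] =>
    rw [RTree.restAt]
    exact (RTree.rp_spec t).1
  | .node ts, k :: rest =>
    rw [RTree.isVertex] at hw
    rw [RTree.restAt]
    split
    · rename_i tk h
      split at hw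
      · rename_i tk' h'
        rw [h] at h'
        injection h' with h'
        subst h'
        have hmem : tk ∈ ts := by
          rw [List.getElem?_eq_some_iff] at h
          obtain ⟨hk, rfl⟩ := h
          exact List.getElem_mem hk
        have hdvd : tk.P ∣ (RTree.node ts).R := by
          cases ts with
          | nil => simp at hmem
          | cons a ts' =>
            rw [RTree.R_cons]
            exact dvd_foldr_lcm (List.mem_map.2 ⟨tk, hmem, rfl⟩)
        have hPpos : 0 < tk.P := by
          have := RTree.rp_spec tk
          omega
        have hRpos : 0 < (RTree.node ts).R := (RTree.rp_spec _).1
        have h1 : 0 < (RTree.node ts).R / tk.P := Nat.div_pos (Nat.le_of_dvd hRpos hdvd) hPpos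
        have h2 : 0 < tk.restAt rest := by
          have := List.sizeOf_lt_of_mem hmem
          exact restoration_value_pos tk rest hw
        exact Nat.mul_pos h1 h2
      · exact absurd hw not_false
    · rename_i h
      split at hw
      · rename_i tk' h'
        rw [h] at h'
        exact absurd h' (by simp)
      · exact absurd hw not_false
termination_by sizeOf T
end

section
/- For the sequence a_n = P(Path_n) of periods of rooted paths, a_0 = 2 and a_{n+1} = 3·a_n − a_{n-1} with a_{-1} interpreted appropriately; explicitly a_{n+1} = 3·a_n − R(Path_n) and R(Path_{n+1}) = a_n, which yields a_n = F_{2n+3} where F denotes the Fibonacci numbers (F_1 = F_2 = 1), i.e. the periods are 2, 5, 13, 34, 89, .... -/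
/-- `path n`: the rooted path on `n+1` vertices, rooted at one end. -/
def RTree.path : ℕ → RTree
  | 0 => .node []
  | n + 1 => .node [RTree.path n]

lemma RP_single (t : RTree) (hp : 0 < t.P) :
    (RTree.node [t]).RP = (t.P, 3 * t.P - t.R) := by
  simp only [RTree.P] at hp
  rw [RTree.RP]
  simp [RTree.P, RTree.R, Nat.lcm, Nat.div_self hp]

lemma path_RP (n : ℕ) :
    (RTree.path n).RP = (Nat.fib (2 * n + 1), Nat.fib (2 * n + 3)) := by
  induction n with
  | zero => rw [RTree.path, RTree.RP]; rfl
  | succ n ih =>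
    have hp : 0 < (RTree.path n).P := by
      have h : (RTree.path n).P = Nat.fib (2 * n + 3) := by simp [RTree.P, ih]
      rw [h]; exact Nat.fib_pos.mpr (by omega)
    rw [RTree.path, RP_single _ hp]
    simp only [RTree.P, RTree.R, ih]
    have h1 : 2 * (n + 1) + 1 = 2 * n + 3 := by ring
    have h2 : 2 * (n + 1) + 3 = 2 * n + 5 := by ring
    rw [h1, h2]
    have e1 : Nat.fib (2*n+4) = Nat.fib (2*n+2) + Nat.fib (2*n+3) := Nat.fib_add_two
    have e2 : Nat.fib (2*n+5) = Nat.fib (2*n+3) + Nat.fib (2*n+4) := Nat.fib_add_two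
    have e3 : Nat.fib (2*n+3) = Nat.fib (2*n+1) + Nat.fib (2*n+2) := Nat.fib_add_two
    refine Prod.ext rfl ?_
    simp only []
    omega

/-- For the periods `aₙ = P(Pathₙ)` of rooted paths: `a₀ = 2`,
`a_{n+1} = 3·aₙ − R(Pathₙ)` and `R(Path_{n+1}) = aₙ`; explicitly
`R(Pathₙ) = F_{2n+1}` and `P(Pathₙ) = F_{2n+3}`, so the periods are
`2, 5, 13, 34, 89, …`. -/
theorem path_periods_fibonacci :
    (RTree.path 0).P = 2
      ∧ (∀ n, (RTree.path (n + 1)).P = 3 * (RTree.path n).P - (RTree.path n).R)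
      ∧ (∀ n, (RTree.path (n + 1)).R = (RTree.path n).P)
      ∧ (∀ n, (RTree.path n).R = Nat.fib (2 * n + 1))
      ∧ (∀ n, (RTree.path n).P = Nat.fib (2 * n + 3)) := by
  have hR : ∀ n, (RTree.path n).R = Nat.fib (2 * n + 1) := fun n => by
    simp [RTree.R, path_RP]
  have hP : ∀ n, (RTree.path n).P = Nat.fib (2 * n + 3) := fun n => by
    simp [RTree.P, path_RP]
  have hp : ∀ n, 0 < (RTree.path n).P := fun n => by
    rw [hP]; exact Nat.fib_pos.mpr (by omega)
  refine ⟨by rw [hP]; rfl, fun n => ?_, fun n => ?_, hR, hP⟩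
  · show (RTree.node [RTree.path n]).P = _
    simp [RTree.P, RP_single _ (hp n)]
  · show (RTree.node [RTree.path n]).R = _
    simp [RTree.R, RP_single _ (hp n)]
end
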